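/- Let n ≥ 2 be an integer and let f ∈ L¹(ℝ^{1+n}) be compactly supported. If for every unit vector θ ∈ S^{n-1} the light ray transform Lf(y,θ) = ∫_ℝ f(s, y + sθ) ds vanishes for Lebesgue-almost every y ∈ ℝ^n, then f = 0 almost everywhere. In particular, the light ray transform is injective on compactly supported integrable functions. -/

import Mathlib

open MeasureTheory Metric Real FourierTransform Filter
open scoped Real RealInnerProductSpace Topology

variable {V : Type*} [NormedAddCommGroup V] [InnerProductSpace ℝ V]
  [MeasurableSpace V] [BorelSpace V] [FiniteDimensional ℝ V]

noncomputable def toSchwartz (g : V → ℂ) (hg : ContDiff ℝ (⊤ : ℕ∞) g)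
    (hsupp : HasCompactSupport g) : SchwartzMap V ℂ where
  toFun := g
  smooth' := hg
  decay' := by
    intro k m
    have hc : Continuous fun x => ‖x‖ ^ k * ‖iteratedFDeriv ℝ m g x‖ :=
      (continuous_norm.pow k).mul (hg.continuous_iteratedFDeriv (by exact_mod_cast le_top)).norm
    have hs : HasCompactSupport fun x => ‖x‖ ^ k * ‖iteratedFDeriv ℝ m g x‖ :=
      ((hsupp.iteratedFDeriv m).norm).mul_left
    obtain ⟨C, hC⟩ := hs.exists_bound_of_continuous hc
    exact ⟨C, fun x => by simpa using hC x⟩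

theorem fourier_inj {f : V → ℂ} (hf : Integrable f) (h : ∀ w, 𝓕 f w = 0) :
    f =ᵐ[volume] 0 := by
  apply ae_eq_zero_of_integral_contDiff_smul_eq_zero (hf.locallyIntegrable)
  intro g hgs hgc
  set G : SchwartzMap V ℂ := toSchwartz (fun x => (g x : ℂ))
    (Complex.ofRealCLM.contDiff.comp hgs) (hgc.comp_left (g := (Complex.ofReal)) rfl) with hGdef
  set φ : SchwartzMap V ℂ := (SchwartzMap.fourierTransformCLE ℂ (SchwartzMap V ℂ)).symm G with hφdef
  have hφG : 𝓕 (φ : V → ℂ) = G := by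
    have := (SchwartzMap.fourierTransformCLE ℂ (SchwartzMap V ℂ)).apply_symm_apply G
    rw [← SchwartzMap.fourier_coe, ← FourierTransform.fourierCLE_apply (R := ℂ) φ]
    exact_mod_cast congrArg (fun ψ : SchwartzMap V ℂ => (ψ : V → ℂ)) this
  have key := VectorFourier.integral_fourierIntegral_smul_eq_flip (L := innerₗ V) (μ := (volume : Measure V)) (ν := (volume : Measure V))
    Real.continuous_fourierChar continuous_inner hf φ.integrable
  have h1 : ∫ ξ, (𝓕 f ξ) • (φ ξ) = (0 : ℂ) := by
    simp only [h, zero_smul, integral_zero]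
  rw [show (VectorFourier.fourierIntegral 𝐞 volume (innerₗ V) f) = 𝓕 f from rfl] at key
  have h2 : ∀ x, VectorFourier.fourierIntegral 𝐞 volume (innerₗ V).flip (φ : V → ℂ) x
      = 𝓕 (φ : V → ℂ) x := by
    intro x
    rw [Real.fourier_eq]
    unfold VectorFourier.fourierIntegral
    congr 1
    ext v
    rw [LinearMap.flip_apply]
    show 𝐞 (-(⟪x, v⟫)) • φ v = 𝐞 (-(⟪v, x⟫)) • φ v
    rw [real_inner_comm]
  rw [h1] at key
  simp only [h2, hφG] at key
  have heq : ∀ x, f x • (G x) = g x • f x := by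
    intro x
    show f x • ((g x : ℂ)) = g x • f x
    simp [Complex.real_smul, smul_eq_mul, mul_comm]
  simp only [heq] at key
  exact key.symm

lemma entire_aux {α : Type*} [MeasurableSpace α] {μ : Measure α} (g : α → ℂ) (a : α → ℝ)
    (hg : Integrable g μ) (ha : Measurable a) (R : ℝ) (hR : ∀ p, g p ≠ 0 → |a p| ≤ R) :
    Differentiable ℂ (fun z : ℂ => ∫ p, Complex.exp (-(2*π*Complex.I) * (a p * z)) * g p ∂μ) := by
  intro z₀
  set F : ℂ → α → ℂ := fun z p => Complex.exp (-(2*π*Complex.I) * (a p * z)) * g p with hF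
  set F' : ℂ → α → ℂ := fun z p =>
    (-(2*π*Complex.I) * a p) * Complex.exp (-(2*π*Complex.I) * (a p * z)) * g p with hF'
  have hnormexp : ∀ (p : α) (z : ℂ), ‖Complex.exp (-(2*π*Complex.I) * (a p * z))‖
      = Real.exp (2*π*(a p)*z.im) := by
    intro p z
    rw [Complex.norm_exp]
    congr 1
    simp [Complex.mul_re, Complex.mul_im]
    ring
  have hexp_le : ∀ (p : α) (z : ℂ), g p ≠ 0 → |z.im| ≤ |z₀.im| + 1 →
      Real.exp (2*π*(a p)*z.im) ≤ Real.exp (2*π*R*(|z₀.im|+1)) := by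
    intro p z h0 him
    apply Real.exp_le_exp.2
    have hap := hR p h0
    have hRnn : 0 ≤ R := (abs_nonneg _).trans hap
    have k1 : a p * z.im ≤ |a p| * |z.im| := by rw [← abs_mul]; exact le_abs_self _
    have k2 : |a p| * |z.im| ≤ R * (|z₀.im|+1) := by
      nlinarith [abs_nonneg (a p), abs_nonneg z.im, abs_nonneg z₀.im]
    nlinarith [Real.pi_pos]
  have him : ∀ z ∈ ball z₀ 1, |z.im| ≤ |z₀.im| + 1 := by
    intro z hz
    have h1 : |z.im| - |z₀.im| ≤ |z.im - z₀.im| := abs_sub_abs_le_abs_sub _ _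
    have h2 : |z.im - z₀.im| ≤ ‖z - z₀‖ := by
      simpa using Complex.abs_im_le_norm (z - z₀)
    have h3 : ‖z - z₀‖ < 1 := by simpa [Complex.dist_eq] using hz
    linarith
  set C : ℝ := 2*π*R*Real.exp (2*π*R*(|z₀.im|+1)) with hC
  have hbound : ∀ᵐ p ∂μ, ∀ z ∈ ball z₀ 1, ‖F' z p‖ ≤ C * ‖g p‖ := by
    filter_upwards with p z hz
    rcases eq_or_ne (g p) 0 with h0 | h0
    · simp [hF', h0]
    · have hap := hR p h0
      have hRnn : 0 ≤ R := (abs_nonneg _).trans hap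
      have h1 : ‖F' z p‖ = (2*π*|a p|) * Real.exp (2*π*(a p)*z.im) * ‖g p‖ := by
        simp only [hF', norm_mul, hnormexp, norm_neg, map_mul,
          Complex.norm_I, Complex.norm_real, Complex.norm_two, Complex.norm_ofNat]
        simp [abs_of_nonneg Real.pi_pos.le]
      rw [h1, hC]
      have he := hexp_le p z h0 (him z hz)
      have h2 : (0:ℝ) ≤ 2*π*|a p| := by positivity
      have h3 : 2*π*|a p| ≤ 2*π*R := by nlinarith [Real.pi_pos]
      have e1 := Real.exp_pos (2*π*(a p)*z.im)
      have e2 := Real.exp_pos (2*π*R*(|z₀.im|+1))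
      have n1 := norm_nonneg (g p)
      have key : 2*π*|a p| * Real.exp (2*π*(a p)*z.im)
          ≤ 2*π*R * Real.exp (2*π*R*(|z₀.im|+1)) :=
        mul_le_mul h3 he e1.le (by positivity)
      exact mul_le_mul_of_nonneg_right key n1
  have hmeas : ∀ z : ℂ, AEStronglyMeasurable (F z) μ := by
    intro z
    apply AEStronglyMeasurable.mul _ hg.1
    apply Measurable.aestronglyMeasurable
    exact (Complex.measurable_exp.comp (((measurable_const).mul
      ((Complex.measurable_ofReal.comp ha).mul measurable_const))))
  have hFint : Integrable (F z₀) μ := by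
    apply Integrable.mono (hg.norm.const_mul (Real.exp (2*π*R*(|z₀.im|+1)))) (hmeas z₀)
    filter_upwards with p
    rcases eq_or_ne (g p) 0 with h0 | h0
    · simp [hF, h0]
    · have := hexp_le p z₀ h0 (by linarith [abs_nonneg z₀.im])
      have h1 : ‖F z₀ p‖ = Real.exp (2*π*(a p)*z₀.im) * ‖g p‖ := by
        simp only [hF, norm_mul, hnormexp]
      rw [h1]
      have n1 := norm_nonneg (g p)
      have : ‖(Real.exp (2*π*R*(|z₀.im|+1)) * ‖g p‖ : ℝ)‖
          = Real.exp (2*π*R*(|z₀.im|+1)) * ‖g p‖ := by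
        rw [Real.norm_eq_abs, abs_of_nonneg]; positivity
      rw [this]
      nlinarith
  have hF'meas : AEStronglyMeasurable (F' z₀) μ := by
    apply AEStronglyMeasurable.mul _ hg.1
    apply Measurable.aestronglyMeasurable
    apply Measurable.mul
    · exact measurable_const.mul (Complex.measurable_ofReal.comp ha)
    · exact (Complex.measurable_exp.comp (((measurable_const).mul
        ((Complex.measurable_ofReal.comp ha).mul measurable_const))))
  have hderiv : ∀ᵐ p ∂μ, ∀ z ∈ ball z₀ 1, HasDerivAt (fun w => F w p) (F' z p) z := by
    filter_upwards with p z _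
    have : HasDerivAt (fun w : ℂ => -(2*π*Complex.I) * (a p * w)) (-(2*π*Complex.I) * a p) z := by
      simpa [mul_comm, mul_assoc] using
        ((hasDerivAt_id z).const_mul ((-(2*(π:ℂ)*Complex.I)) * (a p : ℂ)))
    simpa [hF, hF', mul_comm, mul_assoc, mul_left_comm] using ((this.cexp).mul_const (g p))
  exact ((hasDerivAt_integral_of_dominated_loc_of_deriv_le (ball_mem_nhds z₀ one_pos)
    (Eventually.of_forall hmeas) hFint hF'meas hbound ((hg.norm.const_mul C)) hderiv).2).differentiableAt

lemma zero_of_zero_on_interval {G : ℂ → ℂ} (hG : Differentiable ℂ G) {r : ℝ} (hr : 0 < r)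
    (h0 : ∀ τ : ℝ, |τ| ≤ r → G τ = 0) : ∀ z, G z = 0 := by
  have hA : AnalyticOnNhd ℂ G Set.univ := fun z _ => hG.analyticAt z
  have hfreq : ∃ᶠ z in 𝓝[≠] (0 : ℂ), G z = 0 := by
    have htend : Tendsto (fun k : ℕ => ((r / (k+1) : ℝ) : ℂ)) atTop (𝓝[≠] (0:ℂ)) := by
      rw [tendsto_nhdsWithin_iff]
      constructor
      · have h1 : Tendsto (fun k : ℕ => (r / (k+1) : ℝ)) atTop (𝓝 0) := by
          have := (tendsto_const_div_atTop_nhds_zero_nat r).comp (tendsto_add_atTop_nat 1)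
          simpa [Function.comp_def] using this
        have := (Complex.continuous_ofReal.tendsto 0).comp h1
        simpa [Function.comp_def] using this
      · filter_upwards with k
        simp only [Set.mem_compl_iff, Set.mem_singleton_iff]
        intro h
        rw [Complex.ofReal_eq_zero, div_eq_zero_iff] at h
        rcases h with h | h
        · exact hr.ne' h
        · exact (Nat.cast_add_one_pos k).ne' h
    apply htend.frequently
    apply Filter.Frequently.of_forall
    intro k
    apply h0
    rw [abs_of_pos (by positivity)]
    rw [div_le_iff₀ (by positivity)]
    nlinarith [Nat.cast_nonneg (α := ℝ) k]
  have := hA.eqOn_zero_of_preconnected_of_frequently_eq_zero isPreconnected_univ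
    (Set.mem_univ (0:ℂ)) hfreq
  exact fun z => this (Set.mem_univ z)


variable {n : ℕ}
local notation "E" => EuclideanSpace ℝ (Fin n)

lemma exists_unit_orth (hn : 2 ≤ n) (ξ : E) : ∃ v : E, ‖v‖ = 1 ∧ ⟪v, ξ⟫ = 0 := by
  have hne : (ℝ ∙ ξ)ᗮ ≠ ⊥ := by
    intro hbot
    have h : (ℝ ∙ ξ) = ⊤ := Submodule.orthogonal_eq_bot_iff.1 hbot
    have h1 : Module.finrank ℝ (ℝ ∙ ξ) ≤ 1 := by
      rcases eq_or_ne ξ 0 with rfl | hξ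
      · rw [Submodule.span_zero_singleton, finrank_bot]; omega
      · rw [finrank_span_singleton hξ]
    have h2 : Module.finrank ℝ E = n := finrank_euclideanSpace_fin
    rw [h, finrank_top, h2] at h1
    omega
  obtain ⟨v', hv'mem, hv'ne⟩ := Submodule.exists_mem_ne_zero_of_ne_bot hne
  have horth : ⟪ξ, v'⟫ = 0 :=
    (Submodule.mem_orthogonal _ _).1 hv'mem ξ (Submodule.mem_span_singleton_self ξ)
  refine ⟨‖v'‖⁻¹ • v', norm_smul_inv_norm hv'ne, ?_⟩
  rw [real_inner_smul_left, real_inner_comm, horth, mul_zero]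

lemma exists_sphere_inner (hn : 2 ≤ n) (ξ : E) (t : ℝ) (ht : |t| ≤ 1) :
    ∃ θ : E, ‖θ‖ = 1 ∧ ⟪θ, ξ⟫ = t * ‖ξ‖ := by
  rcases eq_or_ne ξ 0 with rfl | hξ
  · obtain ⟨v, hv, -⟩ := exists_unit_orth hn (0 : E)
    exact ⟨v, hv, by simp⟩
  obtain ⟨v, hv1, hv0⟩ := exists_unit_orth hn ξ
  have ht2 : 0 ≤ 1 - t^2 := by nlinarith [sq_abs t, abs_nonneg t]
  set u : E := ‖ξ‖⁻¹ • ξ with hu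
  have hu1 : ‖u‖ = 1 := norm_smul_inv_norm hξ
  set θ : E := t • u + Real.sqrt (1 - t^2) • v with hθ
  have huv : ⟪u, v⟫ = 0 := by
    rw [hu, real_inner_smul_left, real_inner_comm, hv0, mul_zero]
  have huξ : ⟪u, ξ⟫ = ‖ξ‖⁻¹ * ‖ξ‖^2 := by
    rw [hu, real_inner_smul_left, real_inner_self_eq_norm_sq]
  clear_value u
  refine ⟨θ, ?_, ?_⟩
  · have hsq : ‖θ‖^2 = 1 := by
      rw [hθ, @norm_add_sq_real]
      rw [real_inner_smul_left, real_inner_smul_right, huv]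
      rw [norm_smul, norm_smul, hu1, hv1]
      simp only [mul_zero, mul_one, Real.norm_eq_abs, mul_pow, sq_abs]
      rw [Real.sq_sqrt ht2]
      ring
    nlinarith [norm_nonneg θ]
  · rw [hθ, inner_add_left, real_inner_smul_left, real_inner_smul_left, hv0]
    rw [huξ]
    rw [sq]
    field_simp
    ring

lemma integrable_char_smul {α : Type*} [MeasurableSpace α] {μ : Measure α} {f : α → ℂ}
    (hf : Integrable f μ) {φ : α → ℝ} (hφ : Measurable φ) :
    Integrable (fun a => 𝐞 (φ a) • f a) μ := by
  have hm : Measurable fun a => ((𝐞 (φ a) : Circle) : ℂ) :=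
    (continuous_subtype_val.comp Real.continuous_fourierChar).measurable.comp hφ
  have : Integrable (fun a => ((𝐞 (φ a) : Circle) : ℂ) * f a) μ :=
    hf.bdd_mul (c := 1) hm.aestronglyMeasurable (Eventually.of_forall fun a => (Circle.norm_coe _).le)
  simpa [Circle.smul_def] using this


lemma step1 (f : ℝ × E → ℂ) (hf : Integrable f) (θ ξ : E)
    (hzero : ∀ᵐ y : E, (∫ s : ℝ, f (s, y + s • θ)) = 0) :
    ∫ p : ℝ × E, 𝐞 (-(p.1 * (-⟪θ, ξ⟫) + ⟪p.2, ξ⟫)) • f p = 0 := by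
  set T : ℝ × E → ℝ × E := fun q => (q.1, q.2 + q.1 • θ) with hTdef
  have hT : MeasurePreserving T volume volume := by
    rw [show (volume : Measure (ℝ × E)) = (volume : Measure ℝ).prod volume from Measure.volume_eq_prod ℝ _]
    exact MeasurePreserving.skew_product (g := fun (s : ℝ) (y : E) => y + s • θ)
      (MeasurePreserving.id volume)
      ((continuous_snd.add (continuous_fst.smul continuous_const)).measurable)
      (Eventually.of_forall fun s => map_add_right_eq_self volume _)
  have hTemb : MeasurableEmbedding T := by
    have : Continuous T := continuous_fst.prodMk
      (continuous_snd.add (continuous_fst.smul continuous_const))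
    exact (Homeomorph.mk
      ⟨T, fun q => (q.1, q.2 - q.1 • θ), fun q => by simp [hTdef], fun q => by simp [hTdef]⟩
      this (continuous_fst.prodMk
        (continuous_snd.sub (continuous_fst.smul continuous_const)))).measurableEmbedding
  set H : ℝ × E → ℂ := fun p => 𝐞 (-(p.1 * (-⟪θ, ξ⟫) + ⟪p.2, ξ⟫)) • f p with hHdef
  have hφm : Measurable fun p : ℝ × E => -(p.1 * (-⟪θ, ξ⟫) + ⟪p.2, ξ⟫) := by
    apply Measurable.neg
    exact ((measurable_fst.mul measurable_const).add
      ((Continuous.inner continuous_snd continuous_const).measurable))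
  have hHint : Integrable H := integrable_char_smul hf hφm
  have hcomp : Integrable (fun q => H (T q)) := by
    exact ((hT.integrable_comp hHint.1).2 hHint).congr (Eventually.of_forall fun q => rfl)
  have e2 : ∀ q : ℝ × E, H (T q) = 𝐞 (-⟪q.2, ξ⟫) • f (q.1, q.2 + q.1 • θ) := by
    intro q
    simp only [hHdef, hTdef]
    congr 2
    rw [inner_add_left, real_inner_smul_left]
    ring
  have e1 : ∫ p, H p = ∫ q, H (T q) := (hT.integral_comp hTemb H).symm
  have e3 : ∫ q : ℝ × E, H (T q) = 0 := by
    have hprod : Integrable (fun q : ℝ × E => H (T q)) ((volume : Measure ℝ).prod volume) := by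
      rwa [← Measure.volume_eq_prod]
    have hzero' : ∀ᵐ y : E, (∫ s : ℝ, H (T (s, y))) = 0 := by
      filter_upwards [hzero] with y hy
      simp only [e2, Circle.smul_def, smul_eq_mul]
      rw [integral_const_mul, hy, mul_zero]
    calc ∫ q : ℝ × E, H (T q)
        = ∫ q : ℝ × E, H (T q) ∂((volume : Measure ℝ).prod volume) := by
          rw [← Measure.volume_eq_prod]
      _ = ∫ s : ℝ, ∫ y : E, H (T (s, y)) := integral_prod _ hprod
      _ = ∫ y : E, ∫ s : ℝ, H (T (s, y)) := integral_integral_swap (by exact hprod)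
      _ = 0 := by rw [integral_congr_ae hzero', integral_zero]
  rw [e1, e3]

/-- Injectivity of the light ray transform on compactly supported integrable functions:
if for every direction `θ` on the unit sphere the integrals of `f` along the light rays
`s ↦ (s, y + sθ)` vanish for almost every `y`, then `f = 0` almost everywhere. -/
theorem lightRay_injective {n : ℕ} (hn : 2 ≤ n)
    (f : ℝ × EuclideanSpace ℝ (Fin n) → ℂ)
    (hf : Integrable f) (hsupp : HasCompactSupport f)
    (hL : ∀ θ : sphere (0 : EuclideanSpace ℝ (Fin n)) 1,
      ∀ᵐ y : EuclideanSpace ℝ (Fin n),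
        (∫ s : ℝ, f (s, y + s • (θ : EuclideanSpace ℝ (Fin n)))) = 0) :
    f =ᵐ[volume] 0 := by
  -- a bound for the time-support of `f`
  obtain ⟨R, hRsub⟩ := hsupp.isCompact.isBounded.subset_closedBall 0
  have hR : ∀ p : ℝ × EuclideanSpace ℝ (Fin n), f p ≠ 0 → |p.1| ≤ R := by
    intro p hp
    have h1 : p ∈ tsupport f := subset_tsupport f hp
    have h2 : ‖p‖ ≤ R := by simpa [dist_eq_norm] using hRsub h1
    exact le_trans (by simpa using norm_fst_le p) h2
  -- vanishing of the joint Fourier transform for `|τ| ≤ ‖ξ‖`, then for all `τ` by analyticity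
  have hFzero : ∀ ξ : EuclideanSpace ℝ (Fin n), ξ ≠ 0 → ∀ τ : ℝ,
      (∫ p : ℝ × EuclideanSpace ℝ (Fin n), 𝐞 (-(p.1 * τ + ⟪p.2, ξ⟫)) • f p) = 0 := by
    intro ξ hξ
    have hξn : 0 < ‖ξ‖ := norm_pos_iff.2 hξ
    set g : ℝ × (EuclideanSpace ℝ (Fin n)) → ℂ := fun p => 𝐞 (-⟪p.2, ξ⟫) • f p with hg
    have hgint : Integrable g := integrable_char_smul hf
      ((Continuous.inner continuous_snd continuous_const).measurable).neg
    set G : ℂ → ℂ := fun z => ∫ p : ℝ × EuclideanSpace ℝ (Fin n),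
      Complex.exp (-(2*π*Complex.I) * (p.1 * z)) * g p with hG
    have hGdiff : Differentiable ℂ G :=
      entire_aux g (fun p => p.1) hgint measurable_fst R
        (fun p hp => hR p (by intro h; apply hp; simp [hg, h]))
    have hGreal : ∀ τ : ℝ, G τ = ∫ p : ℝ × EuclideanSpace ℝ (Fin n), 𝐞 (-(p.1 * τ + ⟪p.2, ξ⟫)) • f p := by
      intro τ
      apply integral_congr_ae
      filter_upwards with p
      simp only [hg, Circle.smul_def, smul_eq_mul, Real.fourierChar_apply, ← mul_assoc,
        ← Complex.exp_add]
      congr 1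
      push_cast
      ring
    have hGzeros : ∀ τ : ℝ, |τ| ≤ ‖ξ‖ → G τ = 0 := by
      intro τ hτ
      obtain ⟨θ, hθ1, hθ2⟩ := exists_sphere_inner hn ξ (-τ/‖ξ‖) (by
        rw [abs_div, abs_of_pos hξn, div_le_one hξn, abs_neg]; exact hτ)
      have hτθ : τ = -⟪θ, ξ⟫ := by
        rw [hθ2]
        field_simp
      have := step1 f hf θ ξ (hL ⟨θ, by simpa [mem_sphere_zero_iff_norm] using hθ1⟩)
      rw [hGreal τ, hτθ]
      exact this
    have := zero_of_zero_on_interval hGdiff hξn hGzeros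
    intro τ
    rw [← hGreal τ]
    exact this τ
  -- slicewise partial Fourier transform in the space variable
  set gfun : EuclideanSpace ℝ (Fin n) → ℝ → ℂ := fun ξ s => ∫ x : EuclideanSpace ℝ (Fin n), 𝐞 (-⟪x, ξ⟫) • f (s, x) with hgfun
  have hfprod : Integrable f ((volume : Measure ℝ).prod volume) := by
    rwa [← Measure.volume_eq_prod]
  have hgint : ∀ ξ : EuclideanSpace ℝ (Fin n), Integrable (gfun ξ) := by
    intro ξ
    have h1 : Integrable (fun p : ℝ × EuclideanSpace ℝ (Fin n) => 𝐞 (-⟪p.2, ξ⟫) • f p)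
        ((volume : Measure ℝ).prod volume) := by
      rw [← Measure.volume_eq_prod]
      exact integrable_char_smul hf
        ((Continuous.inner continuous_snd continuous_const).measurable).neg
    exact h1.integral_prod_left
  have hfour : ∀ ξ : EuclideanSpace ℝ (Fin n), ξ ≠ 0 → ∀ τ : ℝ, 𝓕 (gfun ξ) τ = 0 := by
    intro ξ hξ τ
    have hint2 : Integrable (fun p : ℝ × EuclideanSpace ℝ (Fin n) => 𝐞 (-(p.1 * τ + ⟪p.2, ξ⟫)) • f p)
        ((volume : Measure ℝ).prod volume) := by
      rw [← Measure.volume_eq_prod]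
      exact integrable_char_smul hf (((measurable_fst.mul measurable_const).add
        ((Continuous.inner continuous_snd continuous_const).measurable)).neg)
    have key : 𝓕 (gfun ξ) τ
        = ∫ p : ℝ × EuclideanSpace ℝ (Fin n), 𝐞 (-(p.1 * τ + ⟪p.2, ξ⟫)) • f p := by
      rw [Real.fourier_real_eq]
      rw [show (∫ p : ℝ × EuclideanSpace ℝ (Fin n), 𝐞 (-(p.1 * τ + ⟪p.2, ξ⟫)) • f p)
          = ∫ p : ℝ × EuclideanSpace ℝ (Fin n), 𝐞 (-(p.1 * τ + ⟪p.2, ξ⟫)) • f p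
            ∂((volume : Measure ℝ).prod volume) from by rw [← Measure.volume_eq_prod]]
      rw [integral_prod _ hint2]
      apply integral_congr_ae
      filter_upwards with s
      simp only [hgfun, Circle.smul_def, smul_eq_mul]
      rw [← integral_const_mul]
      apply integral_congr_ae
      filter_upwards with x
      rw [← mul_assoc, ← Circle.coe_mul, ← AddChar.map_add_eq_mul]
      congr 2
      ring_nf
      rfl
    rw [key]
    exact hFzero ξ hξ τ
  have gzero : ∀ ξ : EuclideanSpace ℝ (Fin n), ξ ≠ 0 → gfun ξ =ᵐ[volume] 0 := fun ξ hξ =>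
    fourier_inj (hgint ξ) (hfour ξ hξ)
  -- transfer to almost-every slice via a countable dense set of frequencies
  obtain ⟨D, Dcnt, Ddense⟩ := TopologicalSpace.exists_countable_dense (EuclideanSpace ℝ (Fin n))
  haveI : Nontrivial (EuclideanSpace ℝ (Fin n)) := by
    refine ⟨⟨0, EuclideanSpace.single ⟨0, by omega⟩ 1, ?_⟩⟩
    intro h
    have := congrArg (fun v : EuclideanSpace ℝ (Fin n) => v ⟨0, by omega⟩) h.symm
    simp [EuclideanSpace.single_apply] at this
  have h1 : ∀ᵐ s : ℝ, ∀ ξ ∈ D, ξ ≠ 0 → gfun ξ s = 0 := by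
    rw [ae_ball_iff Dcnt]
    intro ξ _
    rcases eq_or_ne ξ 0 with rfl | hξ
    · filter_upwards with s h; exact absurd rfl h
    · filter_upwards [gzero ξ hξ] with s hs _
      exact hs
  have h2 : ∀ᵐ s : ℝ, Integrable (fun x : EuclideanSpace ℝ (Fin n) => f (s, x)) := hfprod.prod_right_ae
  have hslice : ∀ᵐ s : ℝ, (fun x : EuclideanSpace ℝ (Fin n) => f (s, x)) =ᵐ[volume] 0 := by
    filter_upwards [h1, h2] with s hs1 hs2
    have hcont : Continuous (𝓕 (fun x : EuclideanSpace ℝ (Fin n) => f (s, x))) :=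
      VectorFourier.fourierIntegral_continuous Real.continuous_fourierChar
        (by exact continuous_inner) hs2
    have hD' : Dense (D \ {0}) := Ddense.diff_singleton 0
    have heq : 𝓕 (fun x : EuclideanSpace ℝ (Fin n) => f (s, x)) = 0 := by
      apply Continuous.ext_on hD' hcont continuous_zero
      rintro ξ ⟨hξD, hξ0⟩
      have := hs1 ξ hξD (by simpa using hξ0)
      simpa [Real.fourier_eq] using this
    exact fourier_inj hs2 (fun w => congrFun heq w)
  -- conclude
  have hnorm : ∫⁻ p : ℝ × EuclideanSpace ℝ (Fin n), ‖f p‖₊ ∂(volume) = 0 := by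
    rw [show (volume : Measure (ℝ × EuclideanSpace ℝ (Fin n))) = (volume : Measure ℝ).prod volume from
      Measure.volume_eq_prod ℝ _]
    rw [MeasureTheory.lintegral_prod _ (by
      rw [← Measure.volume_eq_prod]
      exact hf.1.enorm)]
    rw [← lintegral_zero (μ := (volume : Measure ℝ))]
    apply lintegral_congr_ae
    filter_upwards [hslice] with s hs
    rw [← lintegral_zero (μ := (volume : Measure (EuclideanSpace ℝ (Fin n))))]
    apply lintegral_congr_ae
    filter_upwards [hs] with x hx
    simp [hx]
  have := (lintegral_eq_zero_iff' (by
    rw [show (volume : Measure (ℝ × EuclideanSpace ℝ (Fin n))) = (volume : Measure ℝ).prod volume from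
      Measure.volume_eq_prod ℝ _] at hf ⊢
    exact hf.1.enorm)).1 hnorm
  filter_upwards [this] with p hp
  simpa using hp
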